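/- Let $X_1,\ldots,X_n$ be i.i.d. random variables taking values in a measurable space $\mathcal{X}$, let $h:\mathcal{X}^m\to\mathbb{R}$ be a bounded measurable kernel of $m\geq 2$ variables with $n\geq m$, let $m_h=E\,h(X_1,\ldots,X_m)$ and $k=\lfloor n/m\rfloor$. Then for every $t>0$, the one-sided bound $P\{U_n(h)-m_h\geq t\}\leq \exp\left(-\frac{k t^2}{2\|h\|_\infty^2}\right)$ holds. -/

import Mathlib

open MeasureTheory ProbabilityTheory Real

/-- The U-statistic of order `m` with kernel `h` evaluated on the data `x`. -/
noncomputable def Ustat {𝒳 : Type*} {m n : ℕ} (h : (Fin m → 𝒳) → ℝ) (x : Fin n → 𝒳) : ℝ :=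
  (((n - m).factorial : ℝ) / (n.factorial : ℝ)) * ∑ ι : Fin m ↪ Fin n, h fun j => x (ι j)

section Aux

lemma hoeffCore {v : ℝ} (hv : |v| ≤ 1) (u : ℝ) :
    Real.cosh u + v * Real.sinh u ≤ Real.exp (u * v + u ^ 2 / 2) := by
  have hv1 : -1 ≤ v := neg_le_of_abs_le hv
  have hv2 : v ≤ 1 := le_of_abs_le hv
  set D : ℝ → ℝ := fun u => Real.cosh u + v * Real.sinh u with hD_def
  set N : ℝ → ℝ := fun u => Real.sinh u + v * Real.cosh u with hN_def
  have hDpos : ∀ u, 0 < D u := by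
    intro u
    have h1 := Real.cosh_pos u
    have h2 := Real.cosh_sq u
    have h3 : |Real.sinh u| < Real.cosh u := by
      nlinarith [abs_nonneg (Real.sinh u), sq_abs (Real.sinh u)]
    have h4 : |v * Real.sinh u| ≤ |Real.sinh u| := by
      rw [abs_mul]
      exact mul_le_of_le_one_left (abs_nonneg _) hv
    have := neg_abs_le (v * Real.sinh u)
    simp only [hD_def]
    nlinarith
  have hD : ∀ u, HasDerivAt D (N u) u := by
    intro u
    exact (Real.hasDerivAt_cosh u).add ((Real.hasDerivAt_sinh u).const_mul v)
  have hN : ∀ u, HasDerivAt N (D u) u := by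
    intro u
    exact (Real.hasDerivAt_sinh u).add ((Real.hasDerivAt_cosh u).const_mul v)
  set F : ℝ → ℝ := fun u => u * v + u ^ 2 / 2 - Real.log (D u) with hF_def
  set G : ℝ → ℝ := fun u => v + u - N u / D u with hG_def
  have hF : ∀ u, HasDerivAt F (G u) u := by
    intro u
    have h1 : HasDerivAt (fun u : ℝ => u * v + u ^ 2 / 2) (v + u) u := by
      have := (hasDerivAt_mul_const (c := v) (x := u)).add
        ((hasDerivAt_pow 2 u).div_const 2)
      exact this.congr_deriv (by push_cast; ring)
    have h2 := (hD u).log (hDpos u).ne'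
    exact h1.sub h2
  have hG : ∀ u, HasDerivAt G (1 - (D u * D u - N u * N u) / D u ^ 2) u := by
    intro u
    have h2 := (hN u).div (hD u) (hDpos u).ne'
    exact ((hasDerivAt_id u).const_add v).sub h2
  have hGmono : Monotone G := by
    apply monotone_of_deriv_nonneg
    · exact fun u => (hG u).differentiableAt
    · intro u
      rw [(hG u).deriv]
      have h1 : (0:ℝ) < D u ^ 2 := pow_pos (hDpos u) 2
      have h2 : (D u * D u - N u * N u) / D u ^ 2 ≤ 1 := by
        rw [div_le_one h1]
        nlinarith [sq_nonneg (N u)]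
      linarith
  have hG0 : G 0 = 0 := by
    simp [hG_def, hN_def, hD_def, Real.sinh_zero, Real.cosh_zero]
  have hF0 : F 0 = 0 := by
    simp [hF_def, hD_def, Real.sinh_zero, Real.cosh_zero]
  have hFnonneg : ∀ u, 0 ≤ F u := by
    have hFdiff : Differentiable ℝ F := fun u => (hF u).differentiableAt
    intro u
    rcases le_total 0 u with h | h
    · have hmono : MonotoneOn F (Set.Ici 0) := by
        apply monotoneOn_of_deriv_nonneg (convex_Ici 0) hFdiff.continuous.continuousOn
          (hFdiff.differentiableOn)
        intro x hx
        rw [interior_Ici] at hx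
        rw [(hF x).deriv]
        calc (0:ℝ) = G 0 := hG0.symm
          _ ≤ G x := hGmono (le_of_lt hx)
      have := hmono (Set.self_mem_Ici) h h
      rwa [hF0] at this
    · have hanti : AntitoneOn F (Set.Iic 0) := by
        apply antitoneOn_of_deriv_nonpos (convex_Iic 0) hFdiff.continuous.continuousOn
          (hFdiff.differentiableOn)
        intro x hx
        rw [interior_Iic] at hx
        rw [(hF x).deriv]
        calc G x ≤ G 0 := hGmono (le_of_lt hx)
          _ = 0 := hG0
      have := hanti h (Set.self_mem_Iic)  (h)
      rwa [hF0] at this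
  have := hFnonneg u
  have hlog : Real.log (D u) ≤ u * v + u ^ 2 / 2 := by
    simp only [hF_def] at this; linarith
  calc D u = Real.exp (Real.log (D u)) := (Real.exp_log (hDpos u)).symm
    _ ≤ Real.exp (u * v + u ^ 2 / 2) := Real.exp_le_exp.2 hlog

lemma exp_le_convex {C x : ℝ} (hC : 0 < C) (hx : |x| ≤ C) (s : ℝ) :
    Real.exp (s * x) ≤ Real.cosh (s * C) + (x / C) * Real.sinh (s * C) := by
  have hx1 : -C ≤ x := neg_le_of_abs_le hx
  have hx2 : x ≤ C := le_of_abs_le hx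
  have hCne : C ≠ 0 := hC.ne'
  have key := convexOn_exp.2 (Set.mem_univ (s * (-C))) (Set.mem_univ (s * C))
    (show (0:ℝ) ≤ (C - x) / (2 * C) from div_nonneg (by linarith) (by linarith))
    (show (0:ℝ) ≤ (C + x) / (2 * C) from div_nonneg (by linarith) (by linarith))
    (show (C - x) / (2 * C) + (C + x) / (2 * C) = 1 by field_simp; ring)
  simp only [smul_eq_mul] at key
  have harg : (C - x) / (2 * C) * (s * -C) + (C + x) / (2 * C) * (s * C) = s * x := by
    field_simp
    ring
  rw [harg] at key
  calc Real.exp (s * x) ≤ (C - x) / (2 * C) * Real.exp (s * -C)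
        + (C + x) / (2 * C) * Real.exp (s * C) := key
    _ = Real.cosh (s * C) + (x / C) * Real.sinh (s * C) := by
        rw [Real.cosh_eq, Real.sinh_eq, mul_neg, Real.exp_neg]
        have hexp : Real.exp (s * C) > 0 := Real.exp_pos _
        field_simp
        ring

lemma mgf_bound {α : Type*} [MeasurableSpace α] (ν : Measure α) [IsProbabilityMeasure ν]
    (g : α → ℝ) (hg : Measurable g) {C : ℝ} (hC : 0 < C) (hgC : ∀ a, |g a| ≤ C) (s : ℝ) :
    ∫ a, Real.exp (s * (g a - ∫ b, g b ∂ν)) ∂ν ≤ Real.exp (s ^ 2 * C ^ 2 / 2) := by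
  have hgint : Integrable g ν :=
    (integrable_const C).mono' hg.aestronglyMeasurable (ae_of_all _ (by simpa using hgC))
  set M : ℝ := ∫ b, g b ∂ν with hM
  have hMC : |M| ≤ C := by
    have h1 : |M| ≤ ∫ b, |g b| ∂ν := by
      simpa [Real.norm_eq_abs] using norm_integral_le_integral_norm (μ := ν) g
    have h2 : ∫ b, |g b| ∂ν ≤ ∫ _, C ∂ν :=
      integral_mono hgint.abs (integrable_const C) (fun a => hgC a)
    have h3 : ∫ _, C ∂ν = C := by simp
    linarith
  have hexpint : Integrable (fun a => Real.exp (s * g a)) ν := by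
    refine (integrable_const (Real.exp (|s| * C))).mono'
      (measurable_exp.comp (hg.const_mul s)).aestronglyMeasurable (ae_of_all _ fun a => ?_)
    simp only [norm_eq_abs, abs_exp]
    refine Real.exp_le_exp.2 ?_
    calc s * g a ≤ |s * g a| := le_abs_self _
      _ = |s| * |g a| := abs_mul _ _
      _ ≤ |s| * C := by
          exact mul_le_mul_of_nonneg_left (hgC a) (abs_nonneg s)
  have step1 : ∫ a, Real.exp (s * g a) ∂ν ≤ Real.cosh (s * C) + (M / C) * Real.sinh (s * C) := by
    have hrhs : Integrable (fun a => Real.cosh (s * C) + (g a / C) * Real.sinh (s * C)) ν := by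
      exact (integrable_const _).add (((hgint.div_const C).mul_const _))
    calc ∫ a, Real.exp (s * g a) ∂ν
        ≤ ∫ a, (Real.cosh (s * C) + (g a / C) * Real.sinh (s * C)) ∂ν :=
          integral_mono hexpint hrhs (fun a => exp_le_convex hC (hgC a) s)
      _ = Real.cosh (s * C) + (M / C) * Real.sinh (s * C) := by
          rw [integral_add (integrable_const _) ((hgint.div_const C).mul_const _),
            integral_const, integral_mul_const, integral_div]
          simp [hM]
  have step2 : Real.cosh (s * C) + (M / C) * Real.sinh (s * C)
      ≤ Real.exp (s * M + s ^ 2 * C ^ 2 / 2) := by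
    have hv : |M / C| ≤ 1 := by
      rw [abs_div, abs_of_pos hC, div_le_one hC]
      exact hMC
    have := hoeffCore hv (s * C)
    calc Real.cosh (s * C) + (M / C) * Real.sinh (s * C)
        ≤ Real.exp ((s * C) * (M / C) + (s * C) ^ 2 / 2) := this
      _ = Real.exp (s * M + s ^ 2 * C ^ 2 / 2) := by
          congr 1
          field_simp
  have key : ∫ a, Real.exp (s * (g a - M)) ∂ν
      = (∫ a, Real.exp (s * g a) ∂ν) * Real.exp (-(s * M)) := by
    rw [← integral_mul_const]
    congr 1
    funext a
    rw [← Real.exp_add]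
    congr 1
    ring
  rw [key]
  calc (∫ a, Real.exp (s * g a) ∂ν) * Real.exp (-(s * M))
      ≤ Real.exp (s * M + s ^ 2 * C ^ 2 / 2) * Real.exp (-(s * M)) := by
        apply mul_le_mul_of_nonneg_right (step1.trans step2) (Real.exp_pos _).le
    _ = Real.exp (s ^ 2 * C ^ 2 / 2) := by
        rw [← Real.exp_add]; congr 1; ring

lemma card_perm_fiber {m n : ℕ} (hmn : m ≤ n) (e ι : Fin m ↪ Fin n) :
    (Finset.univ.filter fun σ : Equiv.Perm (Fin n) =>
      e.trans σ.toEmbedding = ι).card = (n - m).factorial := by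
  classical
  rw [← Fintype.card_subtype]
  set s : Set (Fin n) := Set.range e with hs
  set tt : Set (Fin n) := Set.range ι with ht
  set e₀ : s ≃ tt := (Equiv.ofInjective e e.injective).symm.trans (Equiv.ofInjective ι ι.injective)
    with he₀
  have h2 : ∀ j : Fin m, (e₀ ⟨e j, Set.mem_range_self j⟩ : Fin n) = ι j := by
    intro j
    have hsymm : (Equiv.ofInjective e e.injective).symm ⟨e j, Set.mem_range_self j⟩ = j := by
      rw [Equiv.symm_apply_eq]
      exact Subtype.ext (by simp)
    simp only [he₀, Equiv.trans_apply, hsymm, Equiv.ofInjective_apply]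
    rfl
  have key : ∀ σ : Equiv.Perm (Fin n),
      (e.trans σ.toEmbedding = ι) ↔ (∀ x : s, σ x = (e₀ x : Fin n)) := by
    intro σ
    constructor
    · intro hσ x
      obtain ⟨j, hj⟩ := x.2
      have h1 : σ (e j) = ι j := by
        have := congrFun (congrArg (fun (f : Fin m ↪ Fin n) => (f : Fin m → Fin n)) hσ) j
        simpa using this
      have hx : x = ⟨e j, Set.mem_range_self j⟩ := Subtype.ext hj.symm
      rw [hx, h2 j]
      exact h1
    · intro hσ
      ext j
      have := hσ ⟨e j, Set.mem_range_self j⟩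
      simp only [Function.Embedding.trans_apply, Equiv.coe_toEmbedding]
      simp only [h2 j] at this
      simp [this]
  have hequiv : {σ : Equiv.Perm (Fin n) // e.trans σ.toEmbedding = ι}
      ≃ ((sᶜ : Set (Fin n)) ≃ (ttᶜ : Set (Fin n))) :=
    (Equiv.subtypeEquivRight key).trans (Equiv.Set.compl e₀)
  rw [Fintype.card_congr hequiv]
  have hcards : Fintype.card (sᶜ : Set (Fin n)) = n - m := by
    rw [Fintype.card_compl_set]
    have : Fintype.card s = m := by
      rw [Fintype.card_congr (Equiv.ofInjective e e.injective).symm, Fintype.card_fin]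
    rw [this, Fintype.card_fin]
  have hcardt : Fintype.card (ttᶜ : Set (Fin n)) = n - m := by
    rw [Fintype.card_compl_set]
    have : Fintype.card tt = m := by
      rw [Fintype.card_congr (Equiv.ofInjective ι ι.injective).symm, Fintype.card_fin]
    rw [this, Fintype.card_fin]
  rw [Fintype.card_equiv (Fintype.equivOfCardEq (hcards.trans hcardt.symm)), hcards]

lemma sum_perm_comp {m n : ℕ} (hmn : m ≤ n) (e : Fin m ↪ Fin n) (f : (Fin m ↪ Fin n) → ℝ) :
    ∑ σ : Equiv.Perm (Fin n), f (e.trans σ.toEmbedding)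
      = ((n - m).factorial : ℝ) * ∑ ι : Fin m ↪ Fin n, f ι := by
  classical
  rw [← Finset.sum_fiberwise_of_maps_to
    (g := fun σ : Equiv.Perm (Fin n) => e.trans σ.toEmbedding)
    (fun σ _ => Finset.mem_univ _) (fun σ => f (e.trans σ.toEmbedding))]
  rw [Finset.mul_sum]
  apply Finset.sum_congr rfl
  intro ι _
  have : ∀ σ ∈ Finset.univ.filter
      (fun σ : Equiv.Perm (Fin n) => e.trans σ.toEmbedding = ι),
      f (e.trans σ.toEmbedding) = f ι := by
    intro σ hσ
    rw [(Finset.mem_filter.mp hσ).2]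
  rw [Finset.sum_congr rfl this, Finset.sum_const, card_perm_fiber hmn e ι, nsmul_eq_mul]

def blkEmb {m k n : ℕ} (hkm : k * m ≤ n) (r : Fin k) : Fin m ↪ Fin n where
  toFun := fun j => ⟨r.1 * m + j.1, by
    have h1 : (r.1 + 1) * m ≤ k * m := Nat.mul_le_mul_right m (Nat.succ_le_of_lt r.2)
    have h2 : j.1 < m := j.2
    have h3 : (r.1 + 1) * m = r.1 * m + m := by ring
    omega⟩
  inj' := by
    intro j j' hj
    have := congrArg Fin.val hj
    simp only at this
    exact Fin.ext (by omega)

lemma blk_ne {m k n : ℕ} (hkm : k * m ≤ n) {a r : Fin k} (har : a ≠ r) (j1 j2 : Fin m) :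
    blkEmb hkm a j1 ≠ blkEmb hkm r j2 := by
  intro hcon
  have hv := congrArg Fin.val hcon
  simp only [blkEmb, Function.Embedding.coeFn_mk] at hv
  change a.1 * m + j1.1 = r.1 * m + j2.1 at hv
  have hj1 : j1.1 < m := j1.2
  have hj2 : j2.1 < m := j2.2
  rcases Nat.lt_or_ge a.1 r.1 with hlt | hge
  · have : (a.1 + 1) * m ≤ r.1 * m := Nat.mul_le_mul_right m (Nat.succ_le_of_lt hlt)
    have h3 : (a.1 + 1) * m = a.1 * m + m := by ring
    omega
  · rcases Nat.lt_or_ge r.1 a.1 with hlt' | hge'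
    · have : (r.1 + 1) * m ≤ a.1 * m := Nat.mul_le_mul_right m (Nat.succ_le_of_lt hlt')
      have h3 : (r.1 + 1) * m = r.1 * m + m := by ring
      omega
    · exact har (Fin.ext (by omega))

lemma ustat_perm {𝒳 : Type*} {m n k : ℕ} (hm : 0 < m) (hmn : m ≤ n) (hkpos : 0 < k)
    (hkm : k * m ≤ n) (h : (Fin m → 𝒳) → ℝ) (x : Fin n → 𝒳) :
    Ustat h x = ((n.factorial : ℝ))⁻¹ * ∑ σ : Equiv.Perm (Fin n),
      ((k : ℝ)⁻¹ * ∑ r : Fin k, h (fun j => x (σ (blkEmb hkm r j)))) := by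
  classical
  have hstep : ∀ σ : Equiv.Perm (Fin n), ∀ r : Fin k,
      h (fun j => x (σ (blkEmb hkm r j)))
        = (fun ι : Fin m ↪ Fin n => h (fun j => x (ι j))) ((blkEmb hkm r).trans σ.toEmbedding) :=
    fun σ r => rfl
  simp_rw [hstep]
  rw [← Finset.mul_sum, Finset.sum_comm]
  have hinner : ∀ r : Fin k, (∑ σ : Equiv.Perm (Fin n),
      h fun j => x (((blkEmb hkm r).trans σ.toEmbedding) j))
      = ((n - m).factorial : ℝ) * ∑ ι : Fin m ↪ Fin n, h fun j => x (ι j) :=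
    fun r => sum_perm_comp hmn (blkEmb hkm r) (fun ι => h fun j => x (ι j))
  simp_rw [hinner]
  rw [Finset.sum_const, Finset.card_univ, Fintype.card_fin, nsmul_eq_mul]
  rw [Ustat]
  have hk0 : (k : ℝ) ≠ 0 := Nat.cast_ne_zero.mpr hkpos.ne'
  have hn0 : (n.factorial : ℝ) ≠ 0 := Nat.cast_ne_zero.mpr n.factorial_ne_zero
  field_simp

lemma law_tuple {Ω : Type*} [MeasureSpace Ω] [IsProbabilityMeasure (ℙ : Measure Ω)]
    {𝒳 : Type*} [MeasurableSpace 𝒳] {n : ℕ}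
    (X : Fin n → Ω → 𝒳) (hXmeas : ∀ i, Measurable (X i))
    (hIndep : iIndepFun X ℙ)
    (i₀ : Fin n) (hid : ∀ i, IdentDistrib (X i) (X i₀) ℙ ℙ)
    {m' : ℕ} (ι : Fin m' → Fin n) (hι : Function.Injective ι) :
    Measure.map (fun ω (j : Fin m') => X (ι j) ω) ℙ
      = Measure.pi (fun _ => Measure.map (X i₀) ℙ) := by
  classical
  set μ₀ : Measure 𝒳 := Measure.map (X i₀) ℙ with hμ₀
  haveI : IsProbabilityMeasure μ₀ := Measure.isProbabilityMeasure_map (hXmeas i₀).aemeasurable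
  have hmeas_tuple : Measurable (fun ω (j : Fin m') => X (ι j) ω) :=
    measurable_pi_lambda _ fun j => hXmeas (ι j)
  refine (Measure.pi_eq fun s hs => ?_).symm
  rw [Measure.map_apply hmeas_tuple (MeasurableSet.univ_pi hs)]
  set sets : Fin n → Set 𝒳 := fun i => ⋂ (j : Fin m') (_ : ι j = i), s j with hsets
  have hsets_at : ∀ j : Fin m', sets (ι j) = s j := by
    intro j
    apply Set.Subset.antisymm
    · intro y hy
      simp only [hsets, Set.mem_iInter] at hy
      exact hy j rfl
    · intro y hy
      simp only [hsets, Set.mem_iInter]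
      intro j' hj'
      rwa [hι hj']
  have hsets_meas : ∀ i, MeasurableSet (sets i) :=
    fun i => MeasurableSet.iInter fun j => MeasurableSet.iInter fun _ => hs j
  set S : Finset (Fin n) := Finset.univ.map ⟨ι, hι⟩ with hS
  have hpre : (fun ω (j : Fin m') => X (ι j) ω) ⁻¹' Set.pi Set.univ s
      = ⋂ i ∈ S, X i ⁻¹' sets i := by
    ext ω
    simp only [Set.mem_preimage, Set.mem_univ_pi, Set.mem_iInter, hS, Finset.mem_map,
      Finset.mem_univ, true_and, Function.Embedding.coeFn_mk]
    constructor
    · rintro H i ⟨j, rfl⟩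
      rw [hsets_at j]
      exact H j
    · intro H j
      have := H (ι j) ⟨j, rfl⟩
      rwa [hsets_at j] at this
  rw [hpre, (iIndepFun_iff_measure_inter_preimage_eq_mul.mp hIndep) S
    (fun i _ => hsets_meas i)]
  rw [hS, Finset.prod_map]
  apply Finset.prod_congr rfl
  intro j _
  simp only [Function.Embedding.coeFn_mk]
  rw [hsets_at j, ← Measure.map_apply (hXmeas (ι j)) (hs j), (hid (ι j)).map_eq]

lemma block_integral_prod {Ω : Type*} [MeasureSpace Ω] [IsProbabilityMeasure (ℙ : Measure Ω)]
    {𝒳 : Type*} [MeasurableSpace 𝒳] {n m k : ℕ} (hkm : k * m ≤ n)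
    (σ : Equiv.Perm (Fin n))
    (X : Fin n → Ω → 𝒳) (hXmeas : ∀ i, Measurable (X i))
    (hIndep : iIndepFun X ℙ)
    (F : Fin k → (Fin m → 𝒳) → ℝ) (hF : ∀ r, Measurable (F r)) (s : Finset (Fin k)) :
    ∫ ω, ∏ r ∈ s, F r (fun j => X (σ (blkEmb hkm r j)) ω) ∂ℙ
      = ∏ r ∈ s, ∫ ω, F r (fun j => X (σ (blkEmb hkm r j)) ω) ∂ℙ := by
  classical
  induction s using Finset.induction_on with
  | empty => simp
  | @insert a s ha ih =>
    set Ta : Finset (Fin n) := Finset.image (fun j => σ (blkEmb hkm a j)) Finset.univ with hTa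
    set Ts : Finset (Fin n) :=
      s.biUnion (fun r => Finset.image (fun j => σ (blkEmb hkm r j)) Finset.univ) with hTs
    have hdisj : Disjoint Ta Ts := by
      rw [Finset.disjoint_left]
      intro i hiTa hiTs
      simp only [hTa, Finset.mem_image, Finset.mem_univ, true_and] at hiTa
      simp only [hTs, Finset.mem_biUnion, Finset.mem_image, Finset.mem_univ, true_and] at hiTs
      obtain ⟨j1, hj1⟩ := hiTa
      obtain ⟨r, hrs, j2, hj2⟩ := hiTs
      have har : a ≠ r := fun hc => ha (hc ▸ hrs)
      have : blkEmb hkm a j1 = blkEmb hkm r j2 := σ.injective (hj1.trans hj2.symm)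
      exact blk_ne hkm har j1 j2 this
    have base := hIndep.indepFun_finset Ta Ts hdisj hXmeas
    set φ : ((i : Ta) → 𝒳) → ℝ := fun g =>
      F a (fun j => g ⟨σ (blkEmb hkm a j),
        Finset.mem_image_of_mem _ (Finset.mem_univ j)⟩) with hφdef
    set ψ : ((i : Ts) → 𝒳) → ℝ := fun g =>
      ∏ r ∈ s.attach, F r (fun j => g ⟨σ (blkEmb hkm r j),
        Finset.mem_biUnion.mpr ⟨r.1, r.2, Finset.mem_image_of_mem _ (Finset.mem_univ j)⟩⟩)
      with hψdef
    have hφm : Measurable φ :=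
      (hF a).comp (measurable_pi_lambda _ fun j => measurable_pi_apply _)
    have hψm : Measurable ψ := by
      apply Finset.measurable_prod
      intro r _
      exact (hF r).comp (measurable_pi_lambda _ fun j => measurable_pi_apply _)
    have hIndepFG : IndepFun (fun ω => F a (fun j => X (σ (blkEmb hkm a j)) ω))
        (fun ω => ∏ r ∈ s, F r (fun j => X (σ (blkEmb hkm r j)) ω)) ℙ := by
      have hcomp := base.comp hφm hψm
      have h1 : (φ ∘ fun ω (i : Ta) => X i ω)
          = fun ω => F a (fun j => X (σ (blkEmb hkm a j)) ω) := rfl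
      have h2 : (ψ ∘ fun ω (i : Ts) => X i ω)
          = fun ω => ∏ r ∈ s, F r (fun j => X (σ (blkEmb hkm r j)) ω) := by
        funext ω
        simp only [Function.comp_apply, hψdef]
        exact Finset.prod_attach s (fun r => F r (fun j => X (σ (blkEmb hkm r j)) ω))
      rwa [h1, h2] at hcomp
    have hmeas1 : AEStronglyMeasurable
        (fun ω => F a (fun j => X (σ (blkEmb hkm a j)) ω)) ℙ :=
      ((hF a).comp (measurable_pi_lambda _ fun j => hXmeas _)).aestronglyMeasurable
    have hmeas2 : AEStronglyMeasurable
        (fun ω => ∏ r ∈ s, F r (fun j => X (σ (blkEmb hkm r j)) ω)) ℙ := by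
      apply Measurable.aestronglyMeasurable
      apply Finset.measurable_prod
      intro r _
      exact (hF r).comp (measurable_pi_lambda _ fun j => hXmeas _)
    have := hIndepFG.integral_mul_eq_mul_integral hmeas1 hmeas2
    have heq : ∫ ω, (F a (fun j => X (σ (blkEmb hkm a j)) ω)
          * ∏ r ∈ s, F r (fun j => X (σ (blkEmb hkm r j)) ω)) ∂ℙ
        = (∫ ω, F a (fun j => X (σ (blkEmb hkm a j)) ω) ∂ℙ)
          * ∫ ω, ∏ r ∈ s, F r (fun j => X (σ (blkEmb hkm r j)) ω) ∂ℙ := by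
      simpa [Pi.mul_apply] using this
    calc ∫ ω, ∏ r ∈ insert a s, F r (fun j => X (σ (blkEmb hkm r j)) ω) ∂ℙ
        = ∫ ω, (F a (fun j => X (σ (blkEmb hkm a j)) ω)
            * ∏ r ∈ s, F r (fun j => X (σ (blkEmb hkm r j)) ω)) ∂ℙ := by
          congr 1
          funext ω
          exact Finset.prod_insert ha
      _ = (∫ ω, F a (fun j => X (σ (blkEmb hkm a j)) ω) ∂ℙ)
            * ∫ ω, ∏ r ∈ s, F r (fun j => X (σ (blkEmb hkm r j)) ω) ∂ℙ := heq
      _ = ∏ r ∈ insert a s, ∫ ω, F r (fun j => X (σ (blkEmb hkm r j)) ω) ∂ℙ := by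
          rw [ih]
          exact (Finset.prod_insert
            (f := fun r => ∫ ω, F r fun j => X (σ ((blkEmb hkm r) j)) ω) ha).symm

end Aux

theorem ustat_hoeffding_one_sided
    {Ω : Type*} [MeasureSpace Ω] [IsProbabilityMeasure (ℙ : Measure Ω)]
    {𝒳 : Type*} [MeasurableSpace 𝒳] {m n : ℕ} (hm : 2 ≤ m) (hmn : m ≤ n)
    (X : Fin n → Ω → 𝒳) (hXmeas : ∀ i, Measurable (X i))
    (hIndep : iIndepFun X ℙ)
    (hid : ∀ i j, IdentDistrib (X i) (X j) ℙ ℙ)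
    (h : (Fin m → 𝒳) → ℝ) (hhmeas : Measurable h)
    (C : ℝ) (hC : ∀ x, |h x| ≤ C)
    (mh : ℝ) (hmh : mh = ∫ ω, h (fun j => X (Fin.castLE hmn j) ω) ∂ℙ)
    (t : ℝ) (ht : 0 < t) :
    ℙ {ω | t ≤ Ustat h (fun i => X i ω) - mh} ≤
      ENNReal.ofReal (Real.exp (-(((n / m : ℕ) : ℝ) * t ^ 2) / (2 * C ^ 2))) := by
  classical
  have hn0 : 0 < n := by omega
  set i₀ : Fin n := ⟨0, hn0⟩ with hi₀
  -- Ω is nonempty, hence C ≥ 0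
  have hΩ : Nonempty Ω := by
    by_contra hne
    rw [not_nonempty_iff] at hne
    have : (ℙ : Measure Ω) Set.univ = 1 := measure_univ
    rw [Set.univ_eq_empty_iff.mpr hne, measure_empty] at this
    exact zero_ne_one this
  obtain ⟨ω₀⟩ := hΩ
  have hC0 : 0 ≤ C := le_trans (abs_nonneg _) (hC (fun _ => X i₀ ω₀))
  rcases eq_or_lt_of_le hC0 with hCeq | hCpos
  · -- degenerate case C = 0
    rw [← hCeq]
    norm_num
    exact prob_le_one
  -- main case
  set k : ℕ := n / m with hk
  have hkpos : 0 < k := Nat.div_pos hmn (by omega)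
  have hkm : k * m ≤ n := Nat.div_mul_le_self n m
  have hkR : (0:ℝ) < (k:ℝ) := by exact_mod_cast hkpos
  have hCne : C ≠ 0 := hCpos.ne'
  set μ₀ : Measure 𝒳 := Measure.map (X i₀) ℙ with hμ₀
  haveI : IsProbabilityMeasure μ₀ := Measure.isProbabilityMeasure_map (hXmeas i₀).aemeasurable
  set ν : Measure (Fin m → 𝒳) := Measure.pi (fun _ => μ₀) with hν
  haveI : IsProbabilityMeasure ν := by rw [hν]; infer_instance
  have hlaw : ∀ {ι : Fin m → Fin n}, Function.Injective ι →
      Measure.map (fun ω (j : Fin m) => X (ι j) ω) ℙ = ν :=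
    fun {ι} hι => law_tuple X hXmeas hIndep i₀ (fun i => hid i i₀) ι hι
  -- mh as an integral over ν
  have hcastinj : Function.Injective (fun j : Fin m => (Fin.castLE hmn j : Fin n)) := by
    intro a b hab
    simpa using Fin.castLE_injective hmn hab
  have hmh' : mh = ∫ y, h y ∂ν := by
    rw [hmh, ← hlaw hcastinj,
      integral_map (measurable_pi_lambda _ fun j => hXmeas _).aemeasurable
        hhmeas.aestronglyMeasurable]
  have hmhC : |mh| ≤ C := by
    have hint : Integrable h ν :=
      (integrable_const C).mono' hhmeas.aestronglyMeasurable
        (ae_of_all _ (by simpa using hC))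
    rw [hmh']
    have h1 : |∫ y, h y ∂ν| ≤ ∫ y, |h y| ∂ν := by
      simpa [Real.norm_eq_abs] using norm_integral_le_integral_norm (μ := ν) h
    have h2 : ∫ y, |h y| ∂ν ≤ ∫ _, C ∂ν :=
      integral_mono hint.abs (integrable_const C) (fun a => hC a)
    have h3 : ∫ _, C ∂ν = C := by simp
    linarith
  -- the block averages
  set Y : Equiv.Perm (Fin n) → Ω → ℝ :=
    fun σ ω => (k : ℝ)⁻¹ * ∑ r : Fin k, h (fun j => X (σ (blkEmb hkm r j)) ω) with hY
  set U : Ω → ℝ := fun ω => Ustat h (fun i => X i ω) with hU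
  have hUdecomp : ∀ ω, U ω = ((n.factorial : ℝ))⁻¹ * ∑ σ : Equiv.Perm (Fin n), Y σ ω :=
    fun ω => ustat_perm (by omega) hmn hkpos hkm h (fun i => X i ω)
  have hYmeas : ∀ σ, Measurable (Y σ) := by
    intro σ
    apply Measurable.const_mul
    exact Finset.measurable_sum _ fun r _ =>
      hhmeas.comp (measurable_pi_lambda _ fun j => hXmeas _)
  have hUmeas : Measurable U := by
    apply Measurable.const_mul
    exact Finset.measurable_sum _ fun ι _ =>
      hhmeas.comp (measurable_pi_lambda _ fun j => hXmeas _)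
  have hYbound : ∀ σ ω, |Y σ ω| ≤ C := by
    intro σ ω
    rw [hY]
    simp only
    rw [abs_mul, abs_inv, Nat.abs_cast]
    have h1 : |∑ r : Fin k, h (fun j => X (σ (blkEmb hkm r j)) ω)| ≤ (k : ℝ) * C := by
      calc |∑ r : Fin k, h (fun j => X (σ (blkEmb hkm r j)) ω)|
          ≤ ∑ r : Fin k, |h (fun j => X (σ (blkEmb hkm r j)) ω)| :=
            Finset.abs_sum_le_sum_abs _ _
        _ ≤ ∑ _r : Fin k, C := Finset.sum_le_sum fun r _ => hC _
        _ = (k : ℝ) * C := by simp [mul_comm]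
    calc (k:ℝ)⁻¹ * |∑ r : Fin k, h (fun j => X (σ (blkEmb hkm r j)) ω)|
        ≤ (k:ℝ)⁻¹ * ((k:ℝ) * C) := by
          exact mul_le_mul_of_nonneg_left h1 (by positivity)
      _ = C := by field_simp
  have hfactR : (0:ℝ) < (n.factorial : ℝ) := by exact_mod_cast n.factorial_pos
  have hcardperm : ((Finset.univ : Finset (Equiv.Perm (Fin n))).card : ℝ)
      = (n.factorial : ℝ) := by
    rw [Finset.card_univ, Fintype.card_perm, Fintype.card_fin]
  have hUbound : ∀ ω, |U ω| ≤ C := by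
    intro ω
    rw [hUdecomp ω, abs_mul, abs_inv, Nat.abs_cast]
    have h1 : |∑ σ : Equiv.Perm (Fin n), Y σ ω| ≤ (n.factorial : ℝ) * C := by
      calc |∑ σ : Equiv.Perm (Fin n), Y σ ω|
          ≤ ∑ σ : Equiv.Perm (Fin n), |Y σ ω| := Finset.abs_sum_le_sum_abs _ _
        _ ≤ ∑ _σ : Equiv.Perm (Fin n), C := Finset.sum_le_sum fun σ _ => hYbound σ ω
        _ = (n.factorial : ℝ) * C := by
            rw [Finset.sum_const, nsmul_eq_mul, hcardperm]
    calc ((n.factorial:ℝ))⁻¹ * |∑ σ : Equiv.Perm (Fin n), Y σ ω|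
        ≤ ((n.factorial:ℝ))⁻¹ * ((n.factorial:ℝ) * C) :=
          mul_le_mul_of_nonneg_left h1 (by positivity)
      _ = C := by field_simp
  set c : ℝ := (k : ℝ) * t / C ^ 2 with hc
  have hcpos : 0 < c := by
    apply div_pos (mul_pos hkR ht)
    positivity
  -- integrability helper
  have hint_exp : ∀ (c' : ℝ) (f : Ω → ℝ), Measurable f → (∀ ω, |f ω| ≤ 2 * C) →
      Integrable (fun ω => Real.exp (c' * f ω)) ℙ := by
    intro c' f hf hb
    refine (integrable_const (Real.exp (|c'| * (2 * C)))).mono'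
      (measurable_exp.comp (hf.const_mul c')).aestronglyMeasurable (ae_of_all _ fun ω => ?_)
    simp only [Real.norm_eq_abs, Real.abs_exp]
    apply Real.exp_le_exp.2
    calc c' * f ω ≤ |c' * f ω| := le_abs_self _
      _ = |c'| * |f ω| := abs_mul _ _
      _ ≤ |c'| * (2 * C) := mul_le_mul_of_nonneg_left (hb ω) (abs_nonneg _)
  have hZbound : ∀ ω, |U ω - mh| ≤ 2 * C := fun ω => by
    have := hUbound ω
    have := hmhC
    have h1 := abs_sub (U ω) mh
    calc |U ω - mh| ≤ |U ω| + |mh| := abs_sub _ _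
      _ ≤ 2 * C := by linarith
  have hYZbound : ∀ σ ω, |Y σ ω - mh| ≤ 2 * C := fun σ ω => by
    calc |Y σ ω - mh| ≤ |Y σ ω| + |mh| := abs_sub _ _
      _ ≤ 2 * C := by linarith [hYbound σ ω, hmhC]
  have hintZ : Integrable (fun ω => Real.exp (c * (U ω - mh))) ℙ :=
    hint_exp c _ (hUmeas.sub_const mh) hZbound
  have hintY : ∀ σ, Integrable (fun ω => Real.exp (c * (Y σ ω - mh))) ℙ :=
    fun σ => hint_exp c _ ((hYmeas σ).sub_const mh) (hYZbound σ)
  -- Jensen pointwise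
  have hpoint : ∀ ω, Real.exp (c * (U ω - mh))
      ≤ ((n.factorial : ℝ))⁻¹ * ∑ σ : Equiv.Perm (Fin n), Real.exp (c * (Y σ ω - mh)) := by
    intro ω
    have hsum : ∑ σ : Equiv.Perm (Fin n), ((n.factorial : ℝ))⁻¹ * (c * (Y σ ω - mh))
        = ((n.factorial : ℝ))⁻¹ * c
          * ((∑ σ : Equiv.Perm (Fin n), Y σ ω) - (n.factorial : ℝ) * mh) := by
      calc ∑ σ : Equiv.Perm (Fin n), ((n.factorial : ℝ))⁻¹ * (c * (Y σ ω - mh))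
          = ∑ σ : Equiv.Perm (Fin n), ((n.factorial : ℝ))⁻¹ * c * (Y σ ω - mh) := by
            exact Finset.sum_congr rfl fun σ _ => by ring
        _ = ((n.factorial : ℝ))⁻¹ * c * ∑ σ : Equiv.Perm (Fin n), (Y σ ω - mh) := by
            rw [Finset.mul_sum]
        _ = ((n.factorial : ℝ))⁻¹ * c
              * ((∑ σ : Equiv.Perm (Fin n), Y σ ω) - (n.factorial : ℝ) * mh) := by
            rw [Finset.sum_sub_distrib, Finset.sum_const, nsmul_eq_mul, hcardperm]
    have harg : c * (U ω - mh) = ∑ σ : Equiv.Perm (Fin n),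
        ((n.factorial : ℝ))⁻¹ • (c * (Y σ ω - mh)) := by
      simp only [smul_eq_mul]
      rw [hsum, hUdecomp ω]
      field_simp
    have hjensen := convexOn_exp.map_sum_le (t := (Finset.univ : Finset (Equiv.Perm (Fin n))))
      (w := fun _ => ((n.factorial : ℝ))⁻¹) (p := fun σ => c * (Y σ ω - mh))
      (fun _ _ => by positivity)
      (by rw [Finset.sum_const, nsmul_eq_mul, hcardperm]; field_simp)
      (fun _ _ => Set.mem_univ _)
    rw [← harg] at hjensen
    calc Real.exp (c * (U ω - mh))
        ≤ ∑ σ : Equiv.Perm (Fin n), ((n.factorial : ℝ))⁻¹ * Real.exp (c * (Y σ ω - mh)) :=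
          hjensen
      _ = ((n.factorial : ℝ))⁻¹ * ∑ σ : Equiv.Perm (Fin n), Real.exp (c * (Y σ ω - mh)) := by
          rw [Finset.mul_sum]
  -- per-permutation mgf bound
  have hpersig : ∀ σ : Equiv.Perm (Fin n), ∫ ω, Real.exp (c * (Y σ ω - mh)) ∂ℙ
      ≤ Real.exp (c ^ 2 * C ^ 2 / (2 * k)) := by
    intro σ
    set F : Fin k → (Fin m → 𝒳) → ℝ := fun _ y => Real.exp ((c / k) * (h y - mh)) with hF
    have hFmeas : ∀ r, Measurable (F r) := fun r =>
      measurable_exp.comp ((hhmeas.sub_const mh).const_mul _)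
    have hptw : ∀ ω, Real.exp (c * (Y σ ω - mh))
        = ∏ r : Fin k, F r (fun j => X (σ (blkEmb hkm r j)) ω) := by
      intro ω
      simp only [hF]
      rw [← Real.exp_sum]
      congr 1
      rw [← Finset.mul_sum, Finset.sum_sub_distrib, Finset.sum_const, Finset.card_univ,
        Fintype.card_fin, nsmul_eq_mul, hY]
      field_simp
    calc ∫ ω, Real.exp (c * (Y σ ω - mh)) ∂ℙ
        = ∫ ω, ∏ r : Fin k, F r (fun j => X (σ (blkEmb hkm r j)) ω) ∂ℙ := by
          congr 1
          funext ω
          exact hptw ω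
      _ = ∏ r : Fin k, ∫ ω, F r (fun j => X (σ (blkEmb hkm r j)) ω) ∂ℙ :=
          block_integral_prod hkm σ X hXmeas hIndep F hFmeas Finset.univ
      _ ≤ ∏ _r : Fin k, Real.exp ((c / k) ^ 2 * C ^ 2 / 2) := by
          apply Finset.prod_le_prod
          · intro r _
            exact integral_nonneg fun ω => (Real.exp_pos _).le
          · intro r _
            have hιinj : Function.Injective (fun j : Fin m => σ (blkEmb hkm r j)) :=
              fun a b hab => (blkEmb hkm r).injective (σ.injective hab)
            have hmap : ∫ ω, F r (fun j => X (σ (blkEmb hkm r j)) ω) ∂ℙ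
                = ∫ y, F r y ∂ν := by
              rw [← hlaw hιinj, integral_map
                (measurable_pi_lambda _ fun j => hXmeas _).aemeasurable
                (hFmeas r).aestronglyMeasurable]
            rw [hmap]
            have hbnd := mgf_bound ν h hhmeas hCpos hC (c / k)
            rw [← hmh'] at hbnd
            exact hbnd
      _ = Real.exp (c ^ 2 * C ^ 2 / (2 * k)) := by
          rw [Finset.prod_const, Finset.card_univ, Fintype.card_fin, ← Real.exp_nat_mul]
          congr 1
          field_simp
  -- Chernoff
  have hchern := measure_ge_le_exp_mul_mgf (X := fun ω => U ω - mh) (μ := ℙ) (t := c)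
    t hcpos.le hintZ
  have hmgf_eq : mgf (fun ω => U ω - mh) ℙ c = ∫ ω, Real.exp (c * (U ω - mh)) ∂ℙ := rfl
  have hmgf_le : ∫ ω, Real.exp (c * (U ω - mh)) ∂ℙ
      ≤ Real.exp (c ^ 2 * C ^ 2 / (2 * k)) := by
    calc ∫ ω, Real.exp (c * (U ω - mh)) ∂ℙ
        ≤ ∫ ω, ((n.factorial : ℝ))⁻¹
            * ∑ σ : Equiv.Perm (Fin n), Real.exp (c * (Y σ ω - mh)) ∂ℙ := by
          refine integral_mono hintZ ?_ hpoint
          exact (integrable_finset_sum _ (fun σ _ => hintY σ)).const_mul _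
      _ = ((n.factorial : ℝ))⁻¹
            * ∑ σ : Equiv.Perm (Fin n), ∫ ω, Real.exp (c * (Y σ ω - mh)) ∂ℙ := by
          rw [integral_const_mul, integral_finset_sum _ (fun σ _ => hintY σ)]
      _ ≤ ((n.factorial : ℝ))⁻¹
            * ∑ _σ : Equiv.Perm (Fin n), Real.exp (c ^ 2 * C ^ 2 / (2 * k)) := by
          refine mul_le_mul_of_nonneg_left ?_ (by positivity)
          exact Finset.sum_le_sum fun σ _ => hpersig σ
      _ = Real.exp (c ^ 2 * C ^ 2 / (2 * k)) := by
          rw [Finset.sum_const, nsmul_eq_mul, hcardperm]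
          field_simp
  have hfinal : (ℙ {ω | t ≤ U ω - mh}).toReal
      ≤ Real.exp (-((k : ℝ) * t ^ 2) / (2 * C ^ 2)) := by
    calc (ℙ {ω | t ≤ U ω - mh}).toReal
        ≤ Real.exp (-c * t) * mgf (fun ω => U ω - mh) ℙ c := hchern
      _ ≤ Real.exp (-c * t) * Real.exp (c ^ 2 * C ^ 2 / (2 * k)) := by
          rw [hmgf_eq]
          exact mul_le_mul_of_nonneg_left hmgf_le (Real.exp_pos _).le
      _ = Real.exp (-((k : ℝ) * t ^ 2) / (2 * C ^ 2)) := by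
          rw [← Real.exp_add]
          congr 1
          rw [hc]
          field_simp
          ring
  calc ℙ {ω | t ≤ Ustat h (fun i => X i ω) - mh}
      = ENNReal.ofReal (ℙ {ω | t ≤ U ω - mh}).toReal := by
        rw [ENNReal.ofReal_toReal (measure_ne_top _ _)]
    _ ≤ ENNReal.ofReal (Real.exp (-((k : ℝ) * t ^ 2) / (2 * C ^ 2))) :=
        ENNReal.ofReal_le_ofReal hfinal
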